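/- Let r and k be integers with r > |k| ≥ 1, and let ε be a real number with |ε| < 1. Then the function W̃(x) = (1/(2r·x^{(2r-1)/(2r)})) · e^{-x^{1/(2r)}} · [1 + ε·sin(kπ·(2r-1)/(2r) + x^{1/(2r)}·tan(kπ/(2r)))] is strictly positive on (0,∞) and satisfies ∫₀^∞ x^n · W̃(x) dx = (2rn)! for all natural numbers n. -/

import Mathlib

open MeasureTheory Real Filter

-- integrability of t^m * exp(-b t) on Ioi 0
lemma aux_integrable (b : ℝ) (hb : 0 < b) (m : ℕ) :
    IntegrableOn (fun t : ℝ => t ^ m * Real.exp (-(b * t))) (Set.Ioi 0) := by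
  have h := integrableOn_rpow_mul_exp_neg_mul_rpow (s := (m:ℝ)) (p := 1) (b := b)
      (lt_of_lt_of_le neg_one_lt_zero m.cast_nonneg) one_pos hb
  refine h.congr_fun (fun x hx => ?_) measurableSet_Ioi
  dsimp only
  rw [Real.rpow_natCast, Real.rpow_one, neg_mul]

-- tendsto t^m * exp(-b t) → 0
lemma aux_tendsto (b : ℝ) (hb : 0 < b) (m : ℕ) :
    Tendsto (fun t : ℝ => t ^ m * Real.exp (-(b * t))) atTop (nhds 0) := by
  have h := (tendsto_pow_mul_exp_neg_atTop_nhds_zero m).comp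
      (tendsto_id.const_mul_atTop hb)
  have h2 := h.const_mul (b ^ m)⁻¹
  rw [mul_zero] at h2
  refine h2.congr' ?_
  filter_upwards [eventually_gt_atTop 0] with t ht
  simp only [Function.comp, id_eq]
  rw [mul_pow]
  field_simp

-- complex integrand integrability
lemma aux_int_c (z : ℂ) (hz : 0 < z.re) (m : ℕ) :
    IntegrableOn (fun t : ℝ => (t:ℂ) ^ m * Complex.exp (-(z * t))) (Set.Ioi 0) := by
  refine Integrable.mono' (aux_integrable z.re hz m) ?_ ?_
  · refine Continuous.aestronglyMeasurable ?_
    exact (Complex.continuous_ofReal.pow m).mul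
      ((continuous_const.mul Complex.continuous_ofReal).neg.cexp)
  · filter_upwards [ae_restrict_mem measurableSet_Ioi] with t ht
    have ht' : (0:ℝ) < t := ht
    rw [norm_mul, norm_pow, Complex.norm_real, Real.norm_eq_abs, abs_of_pos ht']
    have : ‖Complex.exp (-(z * t))‖ = Real.exp (-(z.re * t)) := by
      rw [Complex.norm_exp]
      congr 1
      simp [Complex.neg_re, Complex.mul_re]
    rw [this]

lemma hasDerivAt_aux (z : ℂ) (m : ℕ) (t : ℝ) :
    HasDerivAt (fun t : ℝ => (t:ℂ) ^ m * Complex.exp (-(z * t)))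
      ((m : ℂ) * (t:ℂ) ^ (m - 1) * Complex.exp (-(z * t))
        + (-z) * ((t:ℂ) ^ m * Complex.exp (-(z * t)))) t := by
  have h0 : HasDerivAt (fun t : ℝ => (t:ℂ)) 1 t := Complex.ofRealCLM.hasDerivAt
  have h1 : HasDerivAt (fun t : ℝ => (t:ℂ) ^ m) ((m : ℂ) * (t:ℂ) ^ (m - 1)) t := by
    exact (hasDerivAt_pow m ((t:ℂ))).comp_ofReal
  have h2 : HasDerivAt (fun t : ℝ => Complex.exp (-(z * t)))
      (Complex.exp (-(z * t)) * (-z)) t := by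
    have : HasDerivAt (fun t : ℝ => -(z * (t:ℂ))) (-z) t := by
      exact (HasDerivAt.const_mul z h0).neg.congr_deriv (by simp)
    exact this.cexp
  have := h1.mul h2
  exact this.congr_deriv (by ring)

lemma aux_cint (z : ℂ) (hz : 0 < z.re) :
    ∀ m : ℕ, ∫ t in Set.Ioi (0:ℝ), (t:ℂ) ^ m * Complex.exp (-(z * t))
      = (m.factorial : ℂ) / z ^ (m + 1) := by
  have hzne : z ≠ 0 := fun h => by simp [h] at hz
  have htend : ∀ j : ℕ, Tendsto (fun t : ℝ => (t:ℂ) ^ j * Complex.exp (-(z * t)))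
      atTop (nhds 0) := by
    intro j
    rw [tendsto_zero_iff_norm_tendsto_zero]
    refine (aux_tendsto z.re hz j).congr' ?_
    filter_upwards [eventually_gt_atTop (0:ℝ)] with t ht
    rw [norm_mul, norm_pow, Complex.norm_real, Real.norm_eq_abs, abs_of_pos ht,
      Complex.norm_exp]
    congr 2
    simp [Complex.neg_re, Complex.mul_re]
  intro m
  induction m with
  | zero =>
      have key := integral_Ioi_of_hasDerivAt_of_tendsto' (a := (0:ℝ))
        (f := fun t : ℝ => -(Complex.exp (-(z * t)) / z))
        (f' := fun t : ℝ => Complex.exp (-(z * t)))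
        (fun x _ => by
          have h := hasDerivAt_aux z 0 x
          simp only [pow_zero, one_mul, Nat.zero_sub, Nat.cast_zero, zero_mul, zero_add] at h
          have h2 := (h.div_const z).neg
          convert h2 using 1
          · rfl
          · field_simp)
        (by simpa using aux_int_c z hz 0)
        (by
          have := ((htend 0).div_const z).neg
          simpa using this)
      simp only [Complex.ofReal_zero, mul_zero, neg_zero, Complex.exp_zero] at key
      simpa using key
  | succ m ih =>
      have key := integral_Ioi_of_hasDerivAt_of_tendsto' (a := (0:ℝ))
        (f := fun t : ℝ => (t:ℂ) ^ (m + 1) * Complex.exp (-(z * t)))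
        (f' := fun t : ℝ => ((m:ℂ) + 1) * ((t:ℂ) ^ m * Complex.exp (-(z * t)))
          + (-z) * ((t:ℂ) ^ (m + 1) * Complex.exp (-(z * t))))
        (fun x _ => by
          have h := hasDerivAt_aux z (m + 1) x
          exact h.congr_deriv (by push_cast [Nat.add_sub_cancel]; ring))
        ((((aux_int_c z hz m).const_mul _).add ((aux_int_c z hz (m+1)).const_mul _)))
        (htend (m + 1))
      rw [integral_add ((aux_int_c z hz m).const_mul _) ((aux_int_c z hz (m+1)).const_mul _),
        integral_const_mul, integral_const_mul, ih] at key
      simp only [Complex.ofReal_zero, ne_eq, zero_pow, Nat.succ_ne_zero, not_false_iff,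
        zero_mul, sub_zero] at key
      have hkey : z * ∫ t in Set.Ioi (0:ℝ), (t:ℂ) ^ (m+1) * Complex.exp (-(z * t))
          = ((m:ℂ) + 1) * ((m.factorial : ℂ) / z ^ (m + 1)) := by
        linear_combination -key
      have hz2 : z ^ (m + 1 + 1) ≠ 0 := pow_ne_zero _ hzne
      have hkey2 : (z * ∫ t in Set.Ioi (0:ℝ), (t:ℂ) ^ (m+1) * Complex.exp (-(z * t)))
          * z ^ (m + 1) = ((m:ℂ) + 1) * (m.factorial : ℂ) := by
        rw [hkey]; field_simp
      rw [eq_div_iff hz2, Nat.factorial_succ]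
      push_cast
      linear_combination hkey2

theorem stmt_12 (r : ℕ) (k : ℤ) (hk : 1 ≤ |k|) (hrk : |k| < (r : ℤ))
    (ε : ℝ) (hε : |ε| < 1) :
    (∀ x : ℝ, 0 < x →
      0 < 1 / (2 * (r : ℝ) * x ^ ((2 * (r : ℝ) - 1) / (2 * (r : ℝ)))) *
            Real.exp (-(x ^ (1 / (2 * (r : ℝ))))) *
            (1 + ε * Real.sin ((k : ℝ) * Real.pi * (2 * (r : ℝ) - 1) / (2 * (r : ℝ)) +
              x ^ (1 / (2 * (r : ℝ))) * Real.tan ((k : ℝ) * Real.pi / (2 * (r : ℝ)))))) ∧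
    (∀ n : ℕ,
      ∫ x in Set.Ioi (0:ℝ),
        (x : ℝ) ^ n *
          (1 / (2 * (r : ℝ) * x ^ ((2 * (r : ℝ) - 1) / (2 * (r : ℝ)))) *
            Real.exp (-(x ^ (1 / (2 * (r : ℝ))))) *
            (1 + ε * Real.sin ((k : ℝ) * Real.pi * (2 * (r : ℝ) - 1) / (2 * (r : ℝ)) +
              x ^ (1 / (2 * (r : ℝ))) * Real.tan ((k : ℝ) * Real.pi / (2 * (r : ℝ))))))
        = ((2 * r * n).factorial : ℝ)) := by
  have hr2 : (2:ℝ) ≤ (r:ℝ) := by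
    have : (2:ℤ) ≤ (r:ℤ) := by omega
    exact_mod_cast this
  set R : ℝ := (r : ℝ) with hRdef
  have hR : 0 < R := by linarith
  have h2R : 0 < 2 * R := by linarith
  set θ : ℝ := (k : ℝ) * Real.pi / (2 * R) with hθdef
  set c : ℝ := Real.tan θ with hcdef
  set φ : ℝ := (k : ℝ) * Real.pi * (2 * R - 1) / (2 * R) with hφdef
  set p : ℝ := 1 / (2 * R) with hpdef
  set q : ℝ := (2 * R - 1) / (2 * R) with hqdef
  have hp0 : 0 < p := by positivity
  have hkR : |(k:ℝ)| < R := by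
    rw [hRdef, ← Int.cast_abs]
    exact_mod_cast hrk
  have hθlt : |θ| < Real.pi / 2 := by
    rw [hθdef, abs_div, abs_mul, abs_of_pos Real.pi_pos, abs_of_pos h2R,
      div_lt_div_iff₀ h2R two_pos]
    nlinarith [Real.pi_pos]
  have hθab := abs_lt.mp hθlt
  have hcos : 0 < Real.cos θ := Real.cos_pos_of_mem_Ioo ⟨by linarith [hθab.1], hθab.2⟩
  -- the perturbation factor is positive
  have hpos : ∀ y : ℝ, 0 < 1 + ε * Real.sin y := by
    intro y
    have h1 : |ε * Real.sin y| ≤ |ε| := by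
      rw [abs_mul]
      exact mul_le_of_le_one_right (abs_nonneg ε) (abs_le.mpr ⟨Real.neg_one_le_sin y, Real.sin_le_one y⟩)
    have h2 := abs_lt.mp (lt_of_le_of_lt h1 hε)
    linarith [h2.1]
  constructor
  · intro x hx
    have hxq : 0 < x ^ q := Real.rpow_pos_of_pos hx q
    have h1 : 0 < 1 / (2 * R * x ^ q) := by positivity
    exact mul_pos (mul_pos h1 (Real.exp_pos _)) (hpos _)
  · intro n
    set m : ℕ := 2 * r * n with hmdef
    have hmR : (m:ℝ) = 2 * R * n := by rw [hmdef, hRdef]; push_cast; ring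
    set f : ℝ → ℝ := fun t => t ^ m * Real.exp (-t) * (1 + ε * Real.sin (φ + t * c))
      with hfdef
    have hpne : p ≠ 0 := ne_of_gt hp0
    have h2Rne : (2 * R) ≠ 0 := ne_of_gt h2R
    -- Step A: change of variables y = x ^ p
    have hstepA : (∫ x in Set.Ioi (0:ℝ), x ^ n *
        (1 / (2 * R * x ^ q) * Real.exp (-(x ^ p)) *
          (1 + ε * Real.sin (φ + x ^ p * c))))
        = ∫ x in Set.Ioi (0:ℝ), (|p| * x ^ (p - 1)) • f (x ^ p) := by
      refine setIntegral_congr_fun measurableSet_Ioi (fun x hx => ?_)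
      have hx : (0:ℝ) < x := hx
      have hxq : 0 < x ^ q := Real.rpow_pos_of_pos hx q
      have hpm : (x ^ p) ^ m = x ^ n := by
        rw [← Real.rpow_natCast (x ^ p) m, ← Real.rpow_mul hx.le]
        rw [show p * (m:ℝ) = (n:ℝ) by rw [hpdef, hmR]; field_simp]
        rw [Real.rpow_natCast]
      have hcoef : |p| * x ^ (p - 1) = 1 / (2 * R * x ^ q) := by
        rw [abs_of_pos hp0]
        rw [show p - 1 = -q by rw [hpdef, hqdef]; field_simp; ring]
        rw [Real.rpow_neg hx.le, hpdef]
        field_simp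
      rw [smul_eq_mul]
      simp only [hfdef]
      rw [hpm, hcoef]
      ring
    -- integrability
    have hI1 : IntegrableOn (fun t : ℝ => t ^ m * Real.exp (-t)) (Set.Ioi 0) := by
      have := aux_integrable 1 one_pos m
      simpa using this
    have hI2 : IntegrableOn (fun t : ℝ => t ^ m * Real.exp (-t) * Real.sin (φ + t * c))
        (Set.Ioi 0) := by
      refine Integrable.mono' hI1 ?_ ?_
      · exact (((continuous_pow m).mul (Real.continuous_exp.comp continuous_neg)).mul
          (Real.continuous_sin.comp (continuous_const.add
            (continuous_id.mul continuous_const)))).aestronglyMeasurable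
      · filter_upwards [ae_restrict_mem measurableSet_Ioi] with t ht
        have ht' : (0:ℝ) < t := ht
        rw [Real.norm_eq_abs, abs_mul, abs_mul,
          abs_of_pos (pow_pos ht' m), abs_of_pos (Real.exp_pos _)]
        have hs := abs_le.mpr ⟨Real.neg_one_le_sin (φ + t * c), Real.sin_le_one (φ + t * c)⟩
        exact mul_le_of_le_one_right (by positivity) hs
    -- split the integral
    have hsplit : ∫ t in Set.Ioi (0:ℝ), f t
        = (∫ t in Set.Ioi (0:ℝ), t ^ m * Real.exp (-t))
          + ε * ∫ t in Set.Ioi (0:ℝ), t ^ m * Real.exp (-t) * Real.sin (φ + t * c) := by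
      rw [← integral_const_mul, ← integral_add hI1 (hI2.const_mul ε)]
      refine setIntegral_congr_fun measurableSet_Ioi (fun t _ => ?_)
      simp only [hfdef]
      ring
    -- the Gamma integral
    have hgamma : ∫ t in Set.Ioi (0:ℝ), t ^ m * Real.exp (-t) = (m.factorial : ℝ) := by
      have h2 := integral_re (aux_int_c 1 (by norm_num) m)
      rw [aux_cint 1 (by norm_num) m] at h2
      simp only [RCLike.re_to_complex] at h2
      have h3 : ∀ t : ℝ, ((t:ℂ) ^ m * Complex.exp (-(1 * (t:ℂ)))).re
          = t ^ m * Real.exp (-t) := by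
        intro t
        have : (t:ℂ) ^ m * Complex.exp (-(1 * (t:ℂ))) = ((t ^ m * Real.exp (-t) : ℝ) : ℂ) := by
          rw [one_mul]
          push_cast [Complex.ofReal_exp]
          ring
        rw [this, Complex.ofReal_re]
      calc ∫ t in Set.Ioi (0:ℝ), t ^ m * Real.exp (-t)
          = ∫ t in Set.Ioi (0:ℝ), ((t:ℂ) ^ m * Complex.exp (-(1 * (t:ℂ)))).re :=
            (setIntegral_congr_fun measurableSet_Ioi (fun t _ => (h3 t).symm))
        _ = (m.factorial : ℝ) := by rw [h2]; simp
    -- the oscillating integral vanishes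
    have hsin0 : ∫ t in Set.Ioi (0:ℝ), t ^ m * Real.exp (-t) * Real.sin (φ + t * c) = 0 := by
      set w : ℂ := 1 - (c:ℂ) * Complex.I with hwdef
      have hwre : (0:ℝ) < w.re := by simp [hwdef]
      have hwne : w ≠ 0 := by
        intro h; rw [h] at hwre; simp at hwre
      have hgI : IntegrableOn (fun t : ℝ => Complex.exp ((φ:ℂ) * Complex.I) *
          ((t:ℂ) ^ m * Complex.exp (-(w * t)))) (Set.Ioi 0) :=
        (aux_int_c w hwre m).const_mul _
      have him : ∀ t : ℝ, (Complex.exp ((φ:ℂ) * Complex.I) *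
          ((t:ℂ) ^ m * Complex.exp (-(w * t)))).im
          = t ^ m * Real.exp (-t) * Real.sin (φ + t * c) := by
        intro t
        have harg : -(w * (t:ℂ)) = ((-t : ℝ) : ℂ) + ((t * c : ℝ) : ℂ) * Complex.I := by
          rw [hwdef]; push_cast; ring
        rw [harg, Complex.exp_add]
        have heq : Complex.exp ((φ:ℂ) * Complex.I) * ((t:ℂ) ^ m *
            (Complex.exp (((-t:ℝ):ℂ)) * Complex.exp (((t*c:ℝ):ℂ) * Complex.I)))
            = ((t ^ m * Real.exp (-t) : ℝ) : ℂ) *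
              Complex.exp (((φ + t * c : ℝ) : ℂ) * Complex.I) := by
          rw [show (((φ + t*c : ℝ)):ℂ) * Complex.I
              = (φ:ℂ) * Complex.I + ((t*c:ℝ):ℂ) * Complex.I by push_cast; ring,
            Complex.exp_add, ← Complex.ofReal_exp]
          push_cast
          ring
        rw [heq, Complex.im_ofReal_mul, Complex.exp_ofReal_mul_I_im]
      have h2 := integral_im hgI
      rw [integral_const_mul, aux_cint w hwre m] at h2
      simp only [RCLike.im_to_complex] at h2
      -- compute the value
      have hcosC : (Real.cos θ : ℂ) ≠ 0 := by exact_mod_cast ne_of_gt hcos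
      have hct : Real.cos θ * c = Real.sin θ := by
        rw [hcdef, Real.tan_eq_sin_div_cos]; field_simp
      have hcw : (Real.cos θ : ℂ) * w = Complex.exp (-(θ:ℂ) * Complex.I) := by
        rw [show -(θ:ℂ) * Complex.I = (-(θ:ℂ)) * Complex.I by ring, Complex.exp_mul_I,
          Complex.cos_neg, Complex.sin_neg, ← Complex.ofReal_cos, ← Complex.ofReal_sin, hwdef]
        push_cast [← hct]
        ring
      have h1w : (1:ℂ) / w = (Real.cos θ : ℂ) * Complex.exp ((θ:ℂ) * Complex.I) := by
        rw [eq_comm, eq_div_iff hwne]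
        calc (Real.cos θ : ℂ) * Complex.exp ((θ:ℂ) * Complex.I) * w
            = Complex.exp ((θ:ℂ) * Complex.I) * ((Real.cos θ : ℂ) * w) := by ring
          _ = Complex.exp ((θ:ℂ) * Complex.I) * Complex.exp (-(θ:ℂ) * Complex.I) := by
              rw [hcw]
          _ = 1 := by rw [← Complex.exp_add]; simp
      have hangle : φ + ((m:ℝ) + 1) * θ = ((k * ((n:ℤ) + 1) : ℤ) : ℝ) * Real.pi := by
        rw [hφdef, hθdef, hmR]
        push_cast
        field_simp
        ring
      have hexpj : Complex.exp ((((k * ((n:ℤ) + 1)) : ℤ) : ℂ) * (Real.pi : ℂ) * Complex.I)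
          = (((-1:ℝ) ^ (k * ((n:ℤ) + 1)) : ℝ) : ℂ) := by
        rw [mul_assoc, Complex.exp_int_mul, Complex.exp_pi_mul_I]
        push_cast
        ring
      have hVreal : Complex.exp ((φ:ℂ) * Complex.I) * ((m.factorial : ℂ) / w ^ (m+1))
          = (((m.factorial : ℝ) * Real.cos θ ^ (m+1) * (-1:ℝ) ^ (k * ((n:ℤ) + 1))) : ℝ) := by
        have e1 : (m.factorial : ℂ) / w ^ (m+1)
            = (m.factorial : ℂ) * ((1:ℂ)/w) ^ (m+1) := by
          rw [div_pow, one_pow]; ring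
        rw [e1, h1w, mul_pow, ← Complex.exp_nat_mul]
        have e2 : Complex.exp ((φ:ℂ) * Complex.I) * ((m.factorial : ℂ) *
            ((Real.cos θ : ℂ) ^ (m+1) * Complex.exp ((((m+1):ℕ):ℂ) * ((θ:ℂ) * Complex.I))))
            = (m.factorial : ℂ) * (Real.cos θ : ℂ) ^ (m+1) *
              Complex.exp ((φ:ℂ) * Complex.I + (((m+1):ℕ):ℂ) * ((θ:ℂ) * Complex.I)) := by
          rw [Complex.exp_add]; ring
        rw [e2]
        rw [show (φ:ℂ) * Complex.I + (((m+1):ℕ):ℂ) * ((θ:ℂ) * Complex.I)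
            = ((φ + ((m:ℝ) + 1) * θ : ℝ) : ℂ) * Complex.I by push_cast; ring]
        rw [hangle]
        push_cast
        rw [show ((k:ℂ) * ((n:ℂ) + 1)) * (Real.pi : ℂ) * Complex.I
            = (((k * ((n:ℤ) + 1)) : ℤ) : ℂ) * ((Real.pi : ℂ) * Complex.I) by push_cast; ring,
          Complex.exp_int_mul, Complex.exp_pi_mul_I]
      rw [hVreal, Complex.ofReal_im] at h2
      calc ∫ t in Set.Ioi (0:ℝ), t ^ m * Real.exp (-t) * Real.sin (φ + t * c)
          = ∫ t in Set.Ioi (0:ℝ), (Complex.exp ((φ:ℂ) * Complex.I) *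
              ((t:ℂ) ^ m * Complex.exp (-(w * t)))).im :=
            setIntegral_congr_fun measurableSet_Ioi (fun t _ => (him t).symm)
        _ = 0 := h2
    rw [hstepA, integral_comp_rpow_Ioi f hpne, hsplit, hgamma, hsin0, mul_zero, add_zero]
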